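/- arXiv:1108.4720 — 4 statements merged into one kernel-verified Lean document; each statement's English description precedes it below -/
import Mathlib

section
/- Let Δη ∈ ℝ with 0 < |Δη| ≪ 1 and define u(x,t) = 1 + x + Δη(1 + x + t(1 + x)) for x ≤ 0 and u(x,t) = 1 + Δη(1 − x + t) for x > 0. Then u is continuous at x = 0, satisfies u_tt − u_xx = 0 away from x = 0, u(−1,t) = 0, (u_t + u_x)(1,t) = 0, and the jump condition lim_{ε→0⁺}[u_x(−ε,t) − u_x(ε,t)] = (1+Δη) u(0,t) holds up to terms of order (Δη)². -/
open Real Filter Set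

/-- First-order perturbation solution of `u_tt - u_xx = (1+Δη) δ(x) u`:
it is continuous at `x = 0`, solves the wave equation away from `x = 0`,
satisfies the boundary conditions, and satisfies the jump condition up to `O((Δη)²)`. -/
theorem stmt3 (Δη : ℝ) (h₁ : 0 < |Δη|) (h₂ : |Δη| < 1) :
    let u : ℝ → ℝ → ℝ := fun x t =>
      if x ≤ 0 then 1 + x + Δη * (1 + x + t * (1 + x)) else 1 + Δη * (1 - x + t)
    (∀ t : ℝ, ContinuousAt (fun x => u x t) 0) ∧
    (∀ x t : ℝ, x ≠ 0 →
      deriv (fun s => deriv (fun s' => u x s') s) t -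
        deriv (fun y => deriv (fun y' => u y' t) y) x = 0) ∧
    (∀ t : ℝ, u (-1) t = 0) ∧
    (∀ t : ℝ, deriv (fun s => u 1 s) t + deriv (fun y => u y t) 1 = 0) ∧
    (∀ t : ℝ, Tendsto (fun ε => deriv (fun y => u y t) (-ε) - deriv (fun y => u y t) ε)
        (nhdsWithin 0 (Ioi 0)) (nhds ((1 + Δη) * u 0 t - Δη ^ 2 * (1 + t)))) := by
  intro u
  -- spatial derivative on the left
  have hderiv_neg : ∀ x t : ℝ, x < 0 → deriv (fun y => u y t) x = 1 + Δη * (1 + t) := by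
    intro x t hx
    have heq : (fun y => u y t) =ᶠ[nhds x]
        fun y => (1 + Δη * (1 + t)) * y + (1 + Δη * (1 + t)) := by
      filter_upwards [Iio_mem_nhds hx] with y hy
      simp only [u, if_pos (le_of_lt (mem_Iio.mp hy))]
      ring
    rw [heq.deriv_eq]
    have h : HasDerivAt (fun y : ℝ => (1 + Δη * (1 + t)) * y + (1 + Δη * (1 + t)))
        ((1 + Δη * (1 + t)) * 1) x := ((hasDerivAt_id x).const_mul _).add_const _
    simpa using h.deriv
  -- spatial derivative on the right
  have hderiv_pos : ∀ x t : ℝ, 0 < x → deriv (fun y => u y t) x = -Δη := by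
    intro x t hx
    have heq : (fun y => u y t) =ᶠ[nhds x]
        fun y => (-Δη) * y + (1 + Δη * (1 + t)) := by
      filter_upwards [Ioi_mem_nhds hx] with y hy
      simp only [u, if_neg (not_le.mpr (mem_Ioi.mp hy))]
      ring
    rw [heq.deriv_eq]
    have h : HasDerivAt (fun y : ℝ => (-Δη) * y + (1 + Δη * (1 + t)))
        ((-Δη) * 1) x := ((hasDerivAt_id x).const_mul _).add_const _
    simpa using h.deriv
  -- time derivative
  have hderivT : ∀ x t : ℝ, deriv (fun s => u x s) t = if x ≤ 0 then Δη * (1 + x) else Δη := by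
    intro x t
    by_cases hx : x ≤ 0
    · rw [if_pos hx]
      have hfun : (fun s => u x s)
          = fun s : ℝ => (Δη * (1 + x)) * s + (1 + x + Δη * (1 + x)) := by
        funext s
        simp only [u, if_pos hx]
        ring
      rw [hfun]
      have h : HasDerivAt (fun s : ℝ => (Δη * (1 + x)) * s + (1 + x + Δη * (1 + x)))
          ((Δη * (1 + x)) * 1) t := ((hasDerivAt_id t).const_mul _).add_const _
      simpa using h.deriv
    · rw [if_neg hx]
      have hfun : (fun s => u x s) = fun s : ℝ => Δη * s + (1 + Δη * (1 - x)) := by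
        funext s
        simp only [u, if_neg hx]
        ring
      rw [hfun]
      have h : HasDerivAt (fun s : ℝ => Δη * s + (1 + Δη * (1 - x)))
          (Δη * 1) t := ((hasDerivAt_id t).const_mul _).add_const _
      simpa using h.deriv
  refine ⟨?_, ?_, ?_, ?_, ?_⟩
  · -- continuity at 0
    intro t
    have : Continuous fun x : ℝ => if x ≤ (0 : ℝ) then 1 + x + Δη * (1 + x + t * (1 + x))
        else 1 + Δη * (1 - x + t) := by
      apply Continuous.if_le
      · continuity
      · continuity
      · exact continuous_id
      · exact continuous_const
      · intro x hx
        subst hx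
        ring
    exact this.continuousAt
  · -- wave equation away from 0
    intro x t hx
    have hT : (fun s => deriv (fun s' => u x s') s)
        = fun _ : ℝ => if x ≤ 0 then Δη * (1 + x) else Δη := by
      funext s; exact hderivT x s
    have hTzero : deriv (fun s => deriv (fun s' => u x s') s) t = 0 := by
      rw [hT, deriv_const]
    rcases hx.lt_or_gt with hlt | hgt
    · have hX : (fun y => deriv (fun y' => u y' t) y)
          =ᶠ[nhds x] fun _ => 1 + Δη * (1 + t) := by
        filter_upwards [Iio_mem_nhds hlt] with y hy
        exact hderiv_neg y t hy
      rw [hTzero, hX.deriv_eq, deriv_const, sub_zero]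
    · have hX : (fun y => deriv (fun y' => u y' t) y)
          =ᶠ[nhds x] fun _ => -Δη := by
        filter_upwards [Ioi_mem_nhds hgt] with y hy
        exact hderiv_pos y t hy
      rw [hTzero, hX.deriv_eq, deriv_const, sub_zero]
  · intro t
    simp only [u]
    norm_num
  · intro t
    rw [hderivT 1 t, hderiv_pos 1 t one_pos, if_neg (by norm_num)]
    ring
  · intro t
    have hev : (fun ε => deriv (fun y => u y t) (-ε) - deriv (fun y => u y t) ε)
        =ᶠ[nhdsWithin (0 : ℝ) (Ioi 0)]
        (fun _ => (1 + Δη) * u 0 t - Δη ^ 2 * (1 + t)) := by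
      filter_upwards [self_mem_nhdsWithin] with ε hε
      have hε' : (0 : ℝ) < ε := hε
      rw [hderiv_neg _ t (by linarith), hderiv_pos _ t hε']
      simp only [u, if_pos le_rfl]
      ring
    exact Tendsto.congr' hev.symm tendsto_const_nhds
end

section
/- For the linearized sine-Gordon equation, the piecewise function u^s(x) = C(1+e²)(e^{−x} − e^{x+2}) for x < 0 and u^s(x) = C(1−e²)(eˣ + e^{2−x}) for x > 0 satisfies −(u^s)'' + u^s = 0 away from 0, the boundary conditions u^s(−1)=0 and (u^s)'(1)=0 (in the steady sense), is continuous at 0, and the jump condition [(u^s)'](0⁻) − [(u^s)'](0⁺) = η u^s(0) holds if and only if η = 2 coth(2). -/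
open Real Filter Set

noncomputable def SG1 (C x : ℝ) : ℝ := C * (1 + Real.exp 1 ^ 2) * (Real.exp (-x) - Real.exp (x + 2))
noncomputable def SG1' (C x : ℝ) : ℝ := C * (1 + Real.exp 1 ^ 2) * (-Real.exp (-x) - Real.exp (x + 2))
noncomputable def SG2 (C x : ℝ) : ℝ := C * (1 - Real.exp 1 ^ 2) * (Real.exp x + Real.exp (2 - x))
noncomputable def SG2' (C x : ℝ) : ℝ := C * (1 - Real.exp 1 ^ 2) * (Real.exp x - Real.exp (2 - x))

lemma hasDerivAt_SG1 (C x : ℝ) : HasDerivAt (SG1 C) (SG1' C x) x := by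
  have h1 : HasDerivAt (fun y : ℝ => Real.exp (-y)) (Real.exp (-x) * (-1)) x :=
    (Real.hasDerivAt_exp (-x)).comp x (hasDerivAt_neg x)
  have h2 : HasDerivAt (fun y : ℝ => Real.exp (y + 2)) (Real.exp (x + 2) * 1) x :=
    ((Real.hasDerivAt_exp (x + 2)).comp x ((hasDerivAt_id x).add_const 2) :)
  have := (h1.sub h2).const_mul (C * (1 + Real.exp 1 ^ 2))
  refine this.congr_deriv ?_
  simp only [SG1']; ring

lemma hasDerivAt_SG1' (C x : ℝ) : HasDerivAt (SG1' C) (SG1 C x) x := by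
  have h1 : HasDerivAt (fun y : ℝ => Real.exp (-y)) (Real.exp (-x) * (-1)) x :=
    (Real.hasDerivAt_exp (-x)).comp x (hasDerivAt_neg x)
  have h2 : HasDerivAt (fun y : ℝ => Real.exp (y + 2)) (Real.exp (x + 2) * 1) x :=
    ((Real.hasDerivAt_exp (x + 2)).comp x ((hasDerivAt_id x).add_const 2) :)
  have := ((h1.neg.sub h2)).const_mul (C * (1 + Real.exp 1 ^ 2))
  refine this.congr_deriv ?_
  simp only [SG1]; ring

lemma hasDerivAt_SG2 (C x : ℝ) : HasDerivAt (SG2 C) (SG2' C x) x := by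
  have h1 : HasDerivAt (fun y : ℝ => Real.exp y) (Real.exp x) x := Real.hasDerivAt_exp x
  have h2 : HasDerivAt (fun y : ℝ => Real.exp (2 - y)) (Real.exp (2 - x) * (-1)) x :=
    (Real.hasDerivAt_exp (2 - x)).comp x ((hasDerivAt_id x).const_sub 2)
  have := (h1.add h2).const_mul (C * (1 - Real.exp 1 ^ 2))
  refine this.congr_deriv ?_
  simp only [SG2']; ring

lemma hasDerivAt_SG2' (C x : ℝ) : HasDerivAt (SG2' C) (SG2 C x) x := by
  have h1 : HasDerivAt (fun y : ℝ => Real.exp y) (Real.exp x) x := Real.hasDerivAt_exp x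
  have h2 : HasDerivAt (fun y : ℝ => Real.exp (2 - y)) (Real.exp (2 - x) * (-1)) x :=
    (Real.hasDerivAt_exp (2 - x)).comp x ((hasDerivAt_id x).const_sub 2)
  have := (h1.sub h2).const_mul (C * (1 - Real.exp 1 ^ 2))
  refine this.congr_deriv ?_
  simp only [SG2]; ring

/-- Steady state of the linearized sine-Gordon equation `u_tt - u_xx = (η δ(x) - 1) u`:
the jump condition holds iff `η = 2 coth 2`. -/
theorem stmt7 (C η : ℝ) (hC : C ≠ 0) :
    let e : ℝ := Real.exp 1
    let u : ℝ → ℝ := fun x =>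
      if x < 0 then C * (1 + e ^ 2) * (Real.exp (-x) - Real.exp (x + 2))
      else C * (1 - e ^ 2) * (Real.exp x + Real.exp (2 - x))
    (∀ x : ℝ, -1 < x → x < 1 → x ≠ 0 → -(deriv (deriv u) x) + u x = 0) ∧
    u (-1) = 0 ∧
    deriv u 1 = 0 ∧
    ContinuousAt u 0 ∧
    (Tendsto (fun ε => deriv u (-ε) - deriv u ε) (nhdsWithin 0 (Ioi 0))
        (nhds (η * u 0)) ↔ η = 2 * (Real.cosh 2 / Real.sinh 2)) := by
  intro e u
  have hue : ∀ x : ℝ, u x = if x < 0 then SG1 C x else SG2 C x := fun x => rfl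
  have he2 : Real.exp 1 ^ 2 = Real.exp 2 := by
    rw [sq, ← Real.exp_add]; norm_num
  set E : ℝ := Real.exp 2 with hE
  have hE1 : 1 < E := by
    have := Real.add_one_le_exp (2 : ℝ); nlinarith
  -- eventual equalities
  have huL : ∀ x : ℝ, x < 0 → u =ᶠ[nhds x] SG1 C := by
    intro x hx
    filter_upwards [Iio_mem_nhds hx] with y hy
    rw [hue y, if_pos (mem_Iio.mp hy)]
  have huR : ∀ x : ℝ, 0 < x → u =ᶠ[nhds x] SG2 C := by
    intro x hx
    filter_upwards [Ioi_mem_nhds hx] with y hy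
    rw [hue y, if_neg (not_lt.2 (le_of_lt (mem_Ioi.mp hy)))]
  have hdL : ∀ x : ℝ, x < 0 → deriv u x = SG1' C x := by
    intro x hx
    rw [(huL x hx).deriv_eq, (hasDerivAt_SG1 C x).deriv]
  have hdR : ∀ x : ℝ, 0 < x → deriv u x = SG2' C x := by
    intro x hx
    rw [(huR x hx).deriv_eq, (hasDerivAt_SG2 C x).deriv]
  refine ⟨?_, ?_, ?_, ?_, ?_⟩
  · -- ODE away from 0
    intro x _ _ hx0
    rcases lt_or_gt_of_ne hx0 with hx | hx
    · have h1 : deriv u =ᶠ[nhds x] SG1' C := by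
        filter_upwards [Iio_mem_nhds hx] with y hy using hdL y hy
      rw [h1.deriv_eq, (hasDerivAt_SG1' C x).deriv, hue x, if_pos hx]
      ring
    · have h1 : deriv u =ᶠ[nhds x] SG2' C := by
        filter_upwards [Ioi_mem_nhds hx] with y hy using hdR y hy
      rw [h1.deriv_eq, (hasDerivAt_SG2' C x).deriv, hue x, if_neg (not_lt.2 (le_of_lt hx))]
      ring
  · -- boundary at -1
    rw [hue (-1), if_pos (by norm_num : (-1:ℝ) < 0)]
    norm_num [SG1]
  · -- Neumann-type at 1
    rw [hdR 1 one_pos]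
    norm_num [SG2']
  · -- continuity at 0
    have hu0 : u 0 = SG2 C 0 := by rw [hue 0, if_neg (lt_irrefl 0)]
    have hval : SG1 C 0 = u 0 := by
      rw [hu0]; simp only [SG1, SG2, he2]
      norm_num; ring
    have hleft : Tendsto u (nhdsWithin 0 (Iic 0)) (nhds (u 0)) := by
      have hc : Tendsto (SG1 C) (nhdsWithin 0 (Iic 0)) (nhds (SG1 C 0)) :=
        ((hasDerivAt_SG1 C 0).continuousAt).continuousWithinAt
      rw [← hval]
      refine hc.congr' ?_
      filter_upwards [self_mem_nhdsWithin] with y (hy : y ≤ 0)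
      rcases eq_or_lt_of_le hy with h | h
      · rw [h]; exact hval
      · rw [hue y, if_pos h]
    have hright : Tendsto u (nhdsWithin 0 (Ici 0)) (nhds (u 0)) := by
      have hc : Tendsto (SG2 C) (nhdsWithin 0 (Ici 0)) (nhds (SG2 C 0)) :=
        ((hasDerivAt_SG2 C 0).continuousAt).continuousWithinAt
      rw [hu0]
      refine hc.congr' ?_
      filter_upwards [self_mem_nhdsWithin] with y (hy : 0 ≤ y)
      rw [hue y, if_neg (not_lt.2 hy)]
    rw [ContinuousAt, ← nhdsLE_sup_nhdsGE (a := (0:ℝ)), tendsto_sup]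
    exact ⟨hleft, hright⟩
  · -- jump condition
    have hu0 : u 0 = C * (1 - E) * (1 + E) := by
      rw [hue 0, if_neg (lt_irrefl 0)]
      simp only [SG2, he2]
      norm_num
      left; exact hE.symm
    have hu0ne : u 0 ≠ 0 := by
      rw [hu0]
      have h1 : (1 : ℝ) - E ≠ 0 := by nlinarith
      have h2 : (1 : ℝ) + E ≠ 0 := by nlinarith
      exact mul_ne_zero (mul_ne_zero hC h1) h2
    set L : ℝ := SG1' C 0 - SG2' C 0 with hL
    have hT : Tendsto (fun ε => deriv u (-ε) - deriv u ε) (nhdsWithin 0 (Ioi 0)) (nhds L) := by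
      have hc1 : ContinuousAt (fun ε : ℝ => SG1' C (-ε)) 0 := by
        have := ((hasDerivAt_SG1' C (-0 : ℝ)).continuousAt).comp
          ((continuous_neg (G := ℝ)).continuousAt (x := (0:ℝ)))
        simpa [Function.comp_def] using this
      have hc2 : ContinuousAt (SG2' C) 0 := (hasDerivAt_SG2' C 0).continuousAt
      have hF : Tendsto (fun ε : ℝ => SG1' C (-ε) - SG2' C ε) (nhds 0) (nhds L) := by
        have := (hc1.sub hc2).tendsto
        simpa [hL, Pi.sub_def] using this
      refine (hF.mono_left nhdsWithin_le_nhds).congr' ?_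
      filter_upwards [self_mem_nhdsWithin] with ε (hε : 0 < ε)
      rw [hdL (-ε) (by linarith), hdR ε hε]
    have hLval : L = -2 * C * (1 + E ^ 2) := by
      simp only [hL, SG1', SG2', he2]
      norm_num; ring
    have hkey : 2 * (Real.cosh 2 / Real.sinh 2) * u 0 = L := by
      rw [hu0, hLval, Real.cosh_eq, Real.sinh_eq, Real.exp_neg, ← hE]
      have hE0 : E ≠ 0 := (Real.exp_pos 2).ne'
      have hden : E - E⁻¹ ≠ 0 := by
        have : E⁻¹ < 1 := by
          rw [inv_lt_one_iff₀]; right; exact hE1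
        intro h; nlinarith
      have h3 : E ^ 2 - 1 ≠ 0 := by nlinarith
      have h4 : (-1 : ℝ) + E ^ 2 ≠ 0 := by nlinarith
      field_simp
      have h5 : E * E - 1 ≠ 0 := by nlinarith
      ring
    constructor
    · intro h
      have huniq : η * u 0 = L := tendsto_nhds_unique h hT
      have : η * u 0 = 2 * (Real.cosh 2 / Real.sinh 2) * u 0 := by rw [huniq, hkey]
      exact mul_right_cancel₀ hu0ne this
    · intro h
      rw [h, hkey]
      exact hT
end

section
/- For all natural numbers m and n with m of different parity from n (one even, one odd), ∫_{−1}^{1} P_m'(x) P_n'(x) dx = 0. -/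
open Polynomial

/-- The Legendre polynomials on `[-1,1]`, defined by the three-term recurrence
`(n+2) P_{n+2} = (2n+3) x P_{n+1} - (n+1) P_n` with `P_0 = 1`, `P_1 = x`. -/
noncomputable def legendre : ℕ → Polynomial ℝ
  | 0 => 1
  | 1 => X
  | n + 2 => ((2 * (n : ℝ) + 3) / ((n : ℝ) + 2)) • (X * legendre (n + 1)) -
      (((n : ℝ) + 1) / ((n : ℝ) + 2)) • legendre n

lemma legendre_eval_neg : ∀ (n : ℕ) (x : ℝ),
    (legendre n).eval (-x) = (-1 : ℝ) ^ n * (legendre n).eval x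
  | 0, x => by simp [legendre]
  | 1, x => by simp [legendre]
  | (n + 2), x => by
    simp only [legendre, eval_sub, eval_smul, eval_mul, eval_X, smul_eq_mul,
      legendre_eval_neg (n + 1) x, legendre_eval_neg n x, pow_succ]
    ring

lemma legendre_deriv_eval_neg (n : ℕ) (x : ℝ) :
    (derivative (legendre n)).eval (-x) =
      (-1 : ℝ) ^ (n + 1) * (derivative (legendre n)).eval x := by
  have hcomp : (legendre n).comp (-X) = (-1 : ℝ) ^ n • legendre n := by
    apply Polynomial.funext
    intro x
    simp [legendre_eval_neg n x]
  have hd := congrArg derivative hcomp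
  rw [derivative_comp, derivative_smul] at hd
  have hx := congrArg (fun p => p.eval x) hd
  simp only [eval_mul, eval_comp, derivative_neg, derivative_X, eval_neg, eval_one,
    eval_smul, smul_eq_mul, eval_X] at hx
  rw [pow_succ]
  linear_combination -hx

/-- If `m` and `n` have different parity, then `∫₋₁¹ Pₘ'(x) Pₙ'(x) dx = 0`. -/
theorem stmt9 (m n : ℕ) (h : m % 2 ≠ n % 2) :
    ∫ x in (-1 : ℝ)..1,
      (Polynomial.derivative (legendre m)).eval x *
        (Polynomial.derivative (legendre n)).eval x = 0 := by
  set f : ℝ → ℝ := fun x => (derivative (legendre m)).eval x * (derivative (legendre n)).eval x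
    with hf
  have hodd : ∀ x, f (-x) = -f x := by
    intro x
    have hmn : Odd (m + n) := by rw [Nat.odd_iff]; omega
    have : (-1 : ℝ) ^ (m + 1) * (-1 : ℝ) ^ (n + 1) = -1 := by
      rw [← pow_add]
      have : Odd (m + 1 + (n + 1)) := by
        rcases hmn with ⟨k, hk⟩; exact ⟨k + 1, by omega⟩
      exact this.neg_one_pow
    simp only [hf, legendre_deriv_eval_neg]
    linear_combination (eval x (derivative (legendre m)) * eval x (derivative (legendre n))) * this
  have h1 : ∫ x in (-1 : ℝ)..1, f (-x) = ∫ x in (-1 : ℝ)..1, f x := by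
    rw [intervalIntegral.integral_comp_neg f]
    norm_num
  have h2 : ∫ x in (-1 : ℝ)..1, f (-x) = -∫ x in (-1 : ℝ)..1, f x := by
    simp_rw [hodd]
    exact intervalIntegral.integral_neg
  have := h1.symm.trans h2
  linarith [this]
end

section
/- If m and n are both even or both odd natural numbers with m ≥ n, then ∫_{−1}^{1} P_m'(x) P_n'(x) dx = n(n+1). -/
open Polynomial

lemma leg_rec (n : ℕ) : legendre (n + 2) =
    ((2 * (n : ℝ) + 3) / ((n : ℝ) + 2)) • (X * legendre (n + 1)) -
      (((n : ℝ) + 1) / ((n : ℝ) + 2)) • legendre n := rfl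

lemma nadd2 (n : ℕ) : ((n : ℝ) + 2) ≠ 0 := by positivity
lemma n2add3 (n : ℕ) : (2 * (n : ℝ) + 3) ≠ 0 := by positivity

/-- X * P_{k+1} expansion -/
lemma leg_X_mul (k : ℕ) : X * legendre (k + 1) =
    (((k : ℝ) + 2) / (2 * (k : ℝ) + 3)) • legendre (k + 2) +
      (((k : ℝ) + 1) / (2 * (k : ℝ) + 3)) • legendre k := by
  rw [leg_rec k]
  match_scalars <;> field_simp <;> ring

/-- identities A and C by mutual induction -/
lemma leg_AC : ∀ n : ℕ,
    X * derivative (legendre (n + 1)) =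
      derivative (legendre n) + ((n : ℝ) + 1) • legendre (n + 1) ∧
    derivative (legendre (n + 1)) =
      X * derivative (legendre n) + ((n : ℝ) + 1) • legendre n := by
  intro n
  induction n with
  | zero =>
    constructor <;> simp [legendre]
  | succ n ih =>
    obtain ⟨hA, hC⟩ := ih
    have hB : derivative (legendre (n + 2)) =
        derivative (legendre n) + (2 * (n : ℝ) + 3) • legendre (n + 1) := by
      rw [leg_rec n, derivative_sub, derivative_smul, derivative_smul, derivative_mul,
        derivative_X, one_mul, smul_add, hA]
      have h2 := nadd2 n
      match_scalars <;> field_simp <;> ring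
    constructor
    · -- A (n+1)
      rw [hB, mul_add, mul_smul_comm, leg_rec n, hC]
      have h2 := nadd2 n
      push_cast
      match_scalars <;> field_simp <;> ring
    · -- C (n+1)
      rw [hB, hA]
      push_cast
      match_scalars <;> ring

lemma leg_B (n : ℕ) : derivative (legendre (n + 2)) =
    derivative (legendre n) + (2 * (n : ℝ) + 3) • legendre (n + 1) := by
  rw [leg_rec n, derivative_sub, derivative_smul, derivative_smul, derivative_mul,
    derivative_X, one_mul, smul_add, (leg_AC n).1]
  have h2 := nadd2 n
  match_scalars <;> field_simp <;> ring

lemma leg_eval_one : ∀ n : ℕ, (legendre n).eval 1 = 1 ∧ (legendre (n + 1)).eval 1 = 1 := by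
  intro n
  induction n with
  | zero => simp [legendre]
  | succ n ih =>
    refine ⟨ih.2, ?_⟩
    rw [leg_rec n]
    simp only [eval_sub, eval_smul, eval_mul, eval_X, smul_eq_mul, ih.1, ih.2]
    have h2 := nadd2 n
    field_simp
    ring

lemma leg_parity : ∀ n : ℕ,
    ((legendre n).comp (-X) = ((-1 : ℝ)) ^ n • legendre n) ∧
    ((legendre (n + 1)).comp (-X) = ((-1 : ℝ)) ^ (n + 1) • legendre (n + 1)) := by
  intro n
  induction n with
  | zero => simp [legendre]
  | succ n ih =>
    refine ⟨ih.2, ?_⟩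
    rw [leg_rec n, sub_comp, smul_comp, smul_comp, mul_comp, X_comp, ih.1, ih.2]
    rw [neg_mul, mul_smul_comm, smul_sub]
    match_scalars <;> ring

lemma leg_eval_neg_one (n : ℕ) : (legendre n).eval (-1) = (-1 : ℝ) ^ n := by
  have h := congrArg (eval (1 : ℝ)) (leg_parity n).1
  simp only [eval_comp, eval_neg, eval_X, eval_smul, smul_eq_mul] at h
  rw [h, (leg_eval_one n).1, mul_one]

noncomputable def J (p q : Polynomial ℝ) : ℝ := ∫ x in (-1 : ℝ)..1, p.eval x * q.eval x

lemma J_integrable (p q : Polynomial ℝ) :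
    IntervalIntegrable (fun x => p.eval x * q.eval x) MeasureTheory.volume (-1 : ℝ) 1 :=
  (p.continuous.mul q.continuous).intervalIntegrable _ _

lemma J_comm (p q : Polynomial ℝ) : J p q = J q p := by
  unfold J; congr 1; ext x; ring

lemma J_add_left (p q r : Polynomial ℝ) : J (p + q) r = J p r + J q r := by
  unfold J
  rw [← intervalIntegral.integral_add (J_integrable p r) (J_integrable q r)]
  congr 1; ext x; simp [eval_add]; ring

lemma J_add_right (p q r : Polynomial ℝ) : J p (q + r) = J p q + J p r := by
  rw [J_comm, J_add_left, J_comm q p, J_comm r p]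

lemma J_smul_left (c : ℝ) (p q : Polynomial ℝ) : J (c • p) q = c * J p q := by
  unfold J
  rw [← intervalIntegral.integral_const_mul]
  congr 1; ext x; simp [eval_smul]; ring

lemma J_smul_right (c : ℝ) (p q : Polynomial ℝ) : J p (c • q) = c * J p q := by
  rw [J_comm, J_smul_left, J_comm]

lemma J_zero_left (q : Polynomial ℝ) : J 0 q = 0 := by
  unfold J; simp

lemma J_zero_right (q : Polynomial ℝ) : J q 0 = 0 := by
  rw [J_comm, J_zero_left]

lemma J_sub_left (p q r : Polynomial ℝ) : J (p - q) r = J p r - J q r := by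
  have : p - q + q = p := by ring
  have h := J_add_left (p - q) q r
  rw [this] at h; linarith

lemma J_X_assoc (p q : Polynomial ℝ) : J (X * p) q = J p (X * q) := by
  unfold J; congr 1; ext x; simp [eval_mul]; ring

/-- fundamental theorem of calculus for polynomials on [-1,1] -/
lemma integral_derivative (p : Polynomial ℝ) :
    ∫ x in (-1 : ℝ)..1, (derivative p).eval x = p.eval 1 - p.eval (-1) := by
  have := intervalIntegral.integral_deriv_eq_sub (a := (-1 : ℝ)) (b := 1)
    (f := fun x => p.eval x) (fun x _ => p.differentiable.differentiableAt)
    (by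
      have : (deriv fun x => p.eval x) = fun x => (derivative p).eval x := by
        ext x; exact Polynomial.deriv p
      rw [this]
      exact ((derivative p).continuous).intervalIntegrable _ _)
  rw [← this]
  congr 1; ext x; exact (Polynomial.deriv p).symm

/-- integration by parts -/
lemma J_parts (p q : Polynomial ℝ) :
    J (derivative p) q + J p (derivative q) =
      p.eval 1 * q.eval 1 - p.eval (-1) * q.eval (-1) := by
  have h := integral_derivative (p * q)
  rw [derivative_mul] at h
  unfold J
  rw [← intervalIntegral.integral_add (J_integrable _ _) (J_integrable _ _)]
  rw [eval_mul, eval_mul] at h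
  rw [← h]
  congr 1; ext x; simp [eval_add, eval_mul]

/-- integral of odd function over [-1,1] vanishes -/
lemma integral_odd (f : ℝ → ℝ) (hf : ∀ x, f (-x) = -f x) :
    ∫ x in (-1 : ℝ)..1, f x = 0 := by
  have h := intervalIntegral.integral_comp_neg (a := (-1 : ℝ)) (b := 1) f
  simp only [neg_neg] at h
  have h2 : ∫ x in (-1 : ℝ)..1, f (-x) = ∫ x in (-1 : ℝ)..1, -f x := by
    congr 1; ext x; exact hf x
  rw [h2, intervalIntegral.integral_neg] at h
  linarith

/-- eval of legendre at -x -/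
lemma leg_eval_neg (n : ℕ) (x : ℝ) :
    (legendre n).eval (-x) = (-1 : ℝ) ^ n * (legendre n).eval x := by
  have h := congrArg (eval x) (leg_parity n).1
  simpa [eval_comp] using h

/-- opposite parity implies orthogonal -/
lemma J_parity_zero (m n : ℕ) (h : m % 2 ≠ n % 2) : J (legendre m) (legendre n) = 0 := by
  unfold J
  apply integral_odd
  intro x
  rw [leg_eval_neg, leg_eval_neg]
  have key : (-1 : ℝ) ^ m * (-1 : ℝ) ^ n = -1 := by
    rcases Nat.even_or_odd m with hm | hm
    · have hn : Odd n := Nat.odd_iff.2 (by rw [Nat.even_iff] at hm; omega)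
      rw [hm.neg_one_pow, hn.neg_one_pow]; ring
    · have hn : Even n := Nat.even_iff.2 (by rw [Nat.odd_iff] at hm; omega)
      rw [hm.neg_one_pow, hn.neg_one_pow]; ring
  calc (-1 : ℝ) ^ m * (legendre m).eval x * ((-1 : ℝ) ^ n * (legendre n).eval x)
      = ((-1 : ℝ) ^ m * (-1 : ℝ) ^ n) * ((legendre m).eval x * (legendre n).eval x) := by ring
    _ = -((legendre m).eval x * (legendre n).eval x) := by rw [key]; ring

lemma J_self_nonneg_aux : J (legendre 0) (legendre 0) = 2 := by
  unfold J legendre; simp; norm_num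

lemma J_one_one : J (legendre 1) (legendre 1) = 2 / 3 := by
  unfold J legendre
  simp only [eval_X]
  have : ∫ x in (-1 : ℝ)..1, x * x = ∫ x in (-1 : ℝ)..1, x ^ 2 := by
    congr 1; ext x; ring
  rw [this, integral_pow]
  norm_num

noncomputable def K (p : Polynomial ℝ) : ℝ := ∫ x in (-1 : ℝ)..1, p.eval x

lemma K_add (p q : Polynomial ℝ) : K (p + q) = K p + K q := by
  unfold K
  rw [← intervalIntegral.integral_add (p.continuous.intervalIntegrable _ _)
    (q.continuous.intervalIntegrable _ _)]
  congr 1; ext x; simp [eval_add]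

lemma J_eq_K (p q : Polynomial ℝ) : J p q = K (p * q) := by
  unfold J K; congr 1; ext x; rw [eval_mul]

lemma K_derivative (p : Polynomial ℝ) : K (derivative p) = p.eval 1 - p.eval (-1) :=
  integral_derivative p

/-- orthogonality to derivatives of lower-index Legendre polynomials -/
lemma J_deriv_zero (m : ℕ) (horth : ∀ k, k < m → J (legendre m) (legendre k) = 0) :
    ∀ n, n ≤ m → J (legendre m) (derivative (legendre n)) = 0 := by
  intro n
  induction n using Nat.strong_induction_on with
  | _ n ih =>
  match n with
  | 0 => intro _; have : derivative (legendre 0) = 0 := by simp [legendre]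
         rw [this, J_zero_right]
  | 1 => intro h1
         have : derivative (legendre 1) = legendre 0 := by simp [legendre]
         rw [this]
         exact horth 0 (by omega)
  | (n + 2) => intro hle
               rw [leg_B n, J_add_right, J_smul_right]
               rw [ih n (by omega) (by omega), horth (n + 1) (by omega)]
               ring

lemma leg_orth_norm : ∀ n : ℕ, (∀ k, k < n → J (legendre n) (legendre k) = 0) ∧
    J (legendre n) (legendre n) = 2 / (2 * (n : ℝ) + 1) := by
  intro n
  induction n using Nat.strong_induction_on with
  | _ n ih =>
  match n with
  | 0 => exact ⟨fun k hk => absurd hk (by omega), by rw [J_self_nonneg_aux]; norm_num⟩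
  | 1 =>
    refine ⟨fun k hk => ?_, by rw [J_one_one]; norm_num⟩
    interval_cases k
    exact J_parity_zero 1 0 (by omega)
  | (n + 2) =>
    have horth : ∀ k, k < n + 2 → J (legendre (n + 2)) (legendre k) = 0 := by
      intro k hk
      by_cases hpar : k % 2 = (n + 2) % 2
      · -- same parity
        rw [leg_rec n, J_sub_left, J_smul_left, J_smul_left, J_X_assoc]
        by_cases hkn : k = n
        · subst hkn
          rcases k with _ | m
          ·
            have hX : X * legendre 0 = legendre 1 := by
              show X * 1 = X; rw [mul_one]
            rw [hX, J_one_one, J_self_nonneg_aux]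
            norm_num
          ·
            rw [leg_X_mul m, J_add_right, J_smul_right, J_smul_right]
            have h1 : J (legendre (m + 2)) (legendre (m + 2)) = 2 / (2 * ((m : ℝ) + 2) + 1) := by
              have := (ih (m + 2) (by omega)).2; push_cast at this ⊢; linarith
            have h2 : J (legendre (m + 2)) (legendre m) = 0 :=
              (ih (m + 2) (by omega)).1 m (by omega)
            have h3 : J (legendre (m + 1)) (legendre (m + 1)) = 2 / (2 * ((m : ℝ) + 1) + 1) := by
              have := (ih (m + 1) (by omega)).2; push_cast at this ⊢; linarith
            rw [h1, h2, h3]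
            push_cast
            have hm2 : ((m : ℝ) + 1 + 2) ≠ 0 := by positivity
            have hm3 : (2 * (m : ℝ) + 3) ≠ 0 := by positivity
            have hm4 : (2 * ((m : ℝ) + 2) + 1) ≠ 0 := by positivity
            have hm5 : (2 * ((m : ℝ) + 1) + 1) ≠ 0 := by positivity
            field_simp
            ring
        · -- k < n, same parity
          have hk2 : k + 2 ≤ n := by omega
          have hzn : J (legendre n) (legendre k) = 0 := (ih n (by omega)).1 k (by omega)
          have hX : J (legendre (n + 1)) (X * legendre k) = 0 := by
            rcases k with _ | j
            ·
              have hX0 : X * legendre 0 = legendre 1 := by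
                show X * 1 = X; rw [mul_one]
              rw [hX0]
              exact (ih (n + 1) (by omega)).1 1 (by omega)
            ·
              rw [leg_X_mul j, J_add_right, J_smul_right, J_smul_right,
                (ih (n + 1) (by omega)).1 (j + 2) (by omega),
                (ih (n + 1) (by omega)).1 j (by omega)]
              ring
          rw [hzn, hX]
          ring
      · exact J_parity_zero (n + 2) k (fun h => hpar h.symm)
    refine ⟨horth, ?_⟩
    -- norm computation
    set p := legendre (n + 2) with hp
    have hd : J p (derivative (legendre (n + 1))) = 0 :=
      J_deriv_zero (n + 2) horth (n + 1) (by omega)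
    have hA := (leg_AC (n + 1)).1
    have heq1 : J (X * derivative p) p = ((n : ℝ) + 2) * J p p := by
      have := congrArg (fun q => J q p) hA
      rw [this, J_add_left, J_smul_left, J_comm (derivative (legendre (n + 1))) p, hd]
      push_cast
      ring
    have hsq : (-1 : ℝ) ^ (n + 2) * (-1 : ℝ) ^ (n + 2) = 1 := by
      rw [← pow_add]
      exact Even.neg_one_pow ⟨n + 2, by ring⟩
    have hKd : K (derivative (X * p * p)) = 2 := by
      rw [K_derivative]
      simp only [eval_mul, eval_X, hp, (leg_eval_one (n + 2)).1, leg_eval_neg_one]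
      linear_combination hsq
    have hder2 : derivative (X * p * p) =
        p * p + (X * derivative p * p + X * derivative p * p) := by
      rw [derivative_mul, derivative_mul, derivative_X]
      ring
    have heq2 : (2 : ℝ) = J p p + (J (X * derivative p) p + J (X * derivative p) p) := by
      simp only [J_eq_K]
      rw [← K_add, ← K_add, ← hder2, hKd]
    rw [heq1] at heq2
    push_cast
    have h5 : (2 * ((n : ℝ) + 2) + 1) ≠ 0 := by positivity
    field_simp
    nlinarith [heq2]

lemma J_dd (n : ℕ) : J (derivative (legendre n)) (derivative (legendre n))
    = (n : ℝ) * ((n : ℝ) + 1) := by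
  induction n using Nat.strong_induction_on with
  | _ n ih =>
  match n with
  | 0 => have : derivative (legendre 0) = 0 := by simp [legendre]
         rw [this, J_zero_left]; norm_num
  | 1 => have : derivative (legendre 1) = legendre 0 := by simp [legendre]
         rw [this, J_self_nonneg_aux]; norm_num
  | (n + 2) =>
    rw [leg_B n, J_add_left, J_add_right, J_add_right, J_smul_left, J_smul_left,
      J_smul_right, J_smul_right]
    have h1 : J (legendre (n + 1)) (derivative (legendre n)) = 0 :=
      J_deriv_zero (n + 1) (leg_orth_norm (n + 1)).1 n (by omega)
    have h2 : J (derivative (legendre n)) (legendre (n + 1)) = 0 := by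
      rw [J_comm]; exact h1
    have h3 : J (legendre (n + 1)) (legendre (n + 1)) = 2 / (2 * ((n : ℝ) + 1) + 1) := by
      have := (leg_orth_norm (n + 1)).2; push_cast at this ⊢; linarith
    rw [h1, h2, h3, ih n (by omega)]
    push_cast
    have h4 : (2 * ((n : ℝ) + 1) + 1) ≠ 0 := by positivity
    field_simp
    ring

lemma J_dd' (d n : ℕ) : J (derivative (legendre (n + 2 * d))) (derivative (legendre n))
    = (n : ℝ) * ((n : ℝ) + 1) := by
  induction d with
  | zero => simpa using J_dd n
  | succ d ih =>
    have hidx : n + 2 * (d + 1) = (n + 2 * d) + 2 := by ring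
    rw [hidx, leg_B (n + 2 * d), J_add_left, J_smul_left]
    have h1 : J (legendre (n + 2 * d + 1)) (derivative (legendre n)) = 0 :=
      J_deriv_zero (n + 2 * d + 1) (leg_orth_norm (n + 2 * d + 1)).1 n (by omega)
    rw [ih, h1]
    ring

/-- If `m` and `n` have the same parity and `m ≥ n`, then
`∫₋₁¹ Pₘ'(x) Pₙ'(x) dx = n(n+1)`. -/
theorem stmt10 (m n : ℕ) (hpar : m % 2 = n % 2) (hmn : n ≤ m) :
    ∫ x in (-1 : ℝ)..1,
      (Polynomial.derivative (legendre m)).eval x *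
        (Polynomial.derivative (legendre n)).eval x = (n : ℝ) * ((n : ℝ) + 1) := by
  obtain ⟨d, rfl⟩ : ∃ d, m = n + 2 * d := ⟨(m - n) / 2, by omega⟩
  exact J_dd' d n
end
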